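/- arXiv:2009.13715 — 2 statements merged into one kernel-verified Lean document; each statement's English description precedes it below -/
import Mathlib

section
/- In the MIP for cycles, the constraint that the total number of selected arcs is at most K, combined with flow balance and at-most-one out-flow per vertex, guarantees that any integer feasible solution decomposes into vertex-disjoint simple directed cycles each of length at most K; hence each individual cycle is feasible without any subtour-elimination constraints. -/
/-- A (simple) directed cycle in a digraph given by the arc relation `A`. -/
def IsDiCycle {V : Type*} (A : V → V → Prop) (c : List V) : Prop :=
  c ≠ [] ∧ c.Nodup ∧ c.Chain' A ∧ ∀ h : c ≠ [], A (c.getLast h) (c.head h)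

section Aux

private lemma choose_congr {α : Sort*} {p q : α → Prop} (hp : ∃ x, p x) (hq : ∃ x, q x)
    (h : p = q) : hp.choose = hq.choose := by subst h; rfl

variable {V : Type*} [Fintype V] [DecidableEq V]

lemma exists_period (g : V → V) (hg : Function.Injective g) (u : V) :
    ∃ n, 0 < n ∧ g^[n] u = u := by
  obtain ⟨i, j, hne, hij⟩ := Fintype.exists_ne_map_eq_of_card_lt
    (fun n : Fin (Fintype.card V + 1) => g^[(n : ℕ)] u) (by simp)
  have key : ∀ a b : ℕ, a < b → g^[a] u = g^[b] u → ∃ n, 0 < n ∧ g^[n] u = u := by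
    intro a b hlt he
    refine ⟨b - a, by omega, ?_⟩
    have h2 : g^[a] (g^[b - a] u) = g^[a] u := by
      rw [← Function.iterate_add_apply, show a + (b - a) = b by omega]
      exact he.symm
    exact (hg.iterate a) h2
  have hne' : (i : ℕ) ≠ (j : ℕ) := fun h => hne (Fin.ext h)
  rcases hne'.lt_or_gt with h | h
  · exact key _ _ h hij
  · exact key _ _ h hij.symm

noncomputable def per (g : V → V) (hg : Function.Injective g) (u : V) : ℕ :=
  Nat.find (exists_period g hg u)

lemma per_pos (g : V → V) (hg : Function.Injective g) (u : V) : 0 < per g hg u :=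
  (Nat.find_spec (exists_period g hg u)).1

lemma iterate_per (g : V → V) (hg : Function.Injective g) (u : V) :
    g^[per g hg u] u = u :=
  (Nat.find_spec (exists_period g hg u)).2

lemma per_min (g : V → V) (hg : Function.Injective g) (u : V) {m : ℕ}
    (hm : 0 < m) (hlt : m < per g hg u) : g^[m] u ≠ u :=
  fun h => Nat.find_min (exists_period g hg u) hlt ⟨hm, h⟩

lemma iterate_mod (g : V → V) (hg : Function.Injective g) (i : ℕ) (u : V) :
    g^[i] u = g^[i % per g hg u] u := by
  conv_lhs => rw [← Nat.mod_add_div i (per g hg u)]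
  rw [Function.iterate_add_apply, Function.iterate_mul,
    Function.iterate_fixed (iterate_per g hg u)]

noncomputable def orb (g : V → V) (hg : Function.Injective g) (u : V) : Finset V :=
  (Finset.range (per g hg u)).image (fun i => g^[i] u)

lemma mem_orb (g : V → V) (hg : Function.Injective g) {v u : V} :
    v ∈ orb g hg u ↔ ∃ i, g^[i] u = v := by
  simp only [orb, Finset.mem_image, Finset.mem_range]
  constructor
  · rintro ⟨i, _, h⟩; exact ⟨i, h⟩
  · rintro ⟨i, h⟩
    exact ⟨i % per g hg u, Nat.mod_lt _ (per_pos g hg u), by rw [← iterate_mod g hg]; exact h⟩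

lemma mem_orb_self (g : V → V) (hg : Function.Injective g) (u : V) : u ∈ orb g hg u :=
  (mem_orb g hg).2 ⟨0, rfl⟩

lemma orb_eq (g : V → V) (hg : Function.Injective g) {u v : V} (h : v ∈ orb g hg u) :
    orb g hg v = orb g hg u := by
  obtain ⟨i, hi⟩ := (mem_orb g hg).1 h
  have hu : u ∈ orb g hg v := by
    rw [mem_orb g hg]
    refine ⟨per g hg u * i - i, ?_⟩
    rw [← hi, ← Function.iterate_add_apply,
      Nat.sub_add_cancel (Nat.le_mul_of_pos_left i (per_pos g hg u)),
      Function.iterate_mul, Function.iterate_fixed (iterate_per g hg u)]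
  obtain ⟨m, hm⟩ := (mem_orb g hg).1 hu
  apply Finset.Subset.antisymm
  · intro w hw
    obtain ⟨j, hj⟩ := (mem_orb g hg).1 hw
    exact (mem_orb g hg).2 ⟨j + i, by rw [Function.iterate_add_apply, hi, hj]⟩
  · intro w hw
    obtain ⟨j, hj⟩ := (mem_orb g hg).1 hw
    exact (mem_orb g hg).2 ⟨j + m, by rw [Function.iterate_add_apply, hm, hj]⟩

noncomputable def rep (g : V → V) (hg : Function.Injective g) (u : V) : V :=
  (⟨u, mem_orb_self g hg u⟩ : ∃ v, v ∈ orb g hg u).choose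

lemma rep_mem (g : V → V) (hg : Function.Injective g) (u : V) : rep g hg u ∈ orb g hg u :=
  Exists.choose_spec (⟨u, mem_orb_self g hg u⟩ : ∃ v, v ∈ orb g hg u)

lemma rep_congr (g : V → V) (hg : Function.Injective g) {u u' : V}
    (h : orb g hg u = orb g hg u') : rep g hg u = rep g hg u' :=
  choose_congr _ _ (by funext v; rw [h])

noncomputable def cyc (g : V → V) (hg : Function.Injective g) (u : V) : List V :=
  (List.range (per g hg (rep g hg u))).map (fun i => g^[i] (rep g hg u))

lemma cyc_congr (g : V → V) (hg : Function.Injective g) {u u' : V}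
    (h : orb g hg u = orb g hg u') : cyc g hg u = cyc g hg u' := by
  unfold cyc; rw [rep_congr g hg h]

lemma orbList_nodup (g : V → V) (hg : Function.Injective g) (v : V) :
    ((List.range (per g hg v)).map (fun i => g^[i] v)).Nodup := by
  refine List.Nodup.map_on ?_ List.nodup_range
  intro i hi j hj hij
  rw [List.mem_range] at hi hj
  by_contra hne
  have key : ∀ a b : ℕ, a < b → b < per g hg v → g^[a] v = g^[b] v → False := by
    intro a b hab hb he
    have h2 : g^[a] (g^[b - a] v) = g^[a] v := by
      rw [← Function.iterate_add_apply, show a + (b - a) = b by omega]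
      exact he.symm
    exact per_min g hg v (by omega) (by omega) ((hg.iterate a) h2)
  rcases Nat.lt_or_ge i j with h | h
  · exact key i j h hj hij
  · exact key j i (by omega) hi hij.symm

lemma mem_orbList (g : V → V) (hg : Function.Injective g) {w v : V} :
    w ∈ (List.range (per g hg v)).map (fun i => g^[i] v) ↔ w ∈ orb g hg v := by
  simp only [List.mem_map, List.mem_range, orb, Finset.mem_image, Finset.mem_range]

end Aux

/-- In the MIP for cycles, flow balance, at most one out-going arc per vertex, and a
total of at most `K` selected arcs guarantee that the support of any integer feasible
solution decomposes into vertex-disjoint simple directed cycles, each with at most `K`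
arcs — without any subtour-elimination constraints. -/
theorem stmt16 {V : Type*} [Fintype V] [DecidableEq V]
    (A : V → V → Prop) (K : ℕ)
    (y : V → V → ℕ) (hy01 : ∀ u v, y u v ≤ 1)
    (hsupp : ∀ u v, y u v = 1 → A u v)
    (hbal : ∀ u : V, ∑ v, y u v = ∑ v, y v u)
    (hout : ∀ u : V, ∑ v, y u v ≤ 1)
    (htot : ∑ u, ∑ v, y u v ≤ K) :
    ∃ Cs : Finset (List V),
      (∀ c ∈ Cs, IsDiCycle (fun u v => y u v = 1) c) ∧
      (∀ c ∈ Cs, c.length ≤ K) ∧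
      (∀ c ∈ Cs, ∀ c' ∈ Cs, c ≠ c' → ∀ v ∈ c, v ∉ c') ∧
      (∀ u v : V, y u v = 1 ↔ ∃ c ∈ Cs, (u, v) ∈ c.zip (c.rotate 1)) := by
  classical
  -- basic consequences
  have hin : ∀ u : V, ∑ v, y v u ≤ 1 := by
    intro u; rw [← hbal u]; exact hout u
  have hone : ∀ u v, y u v = 1 → (∑ w, y u w) = 1 := by
    intro u v h
    have h1 : 1 ≤ ∑ w, y u w :=
      h ▸ Finset.single_le_sum (f := y u) (fun _ _ => Nat.zero_le _) (Finset.mem_univ v)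
    exact le_antisymm (hout u) h1
  have huniq : ∀ u v w, y u v = 1 → y u w = 1 → v = w := by
    intro u v w hv hw
    by_contra hne
    have h2 : (∑ x ∈ ({v, w} : Finset V), y u x) ≤ ∑ x, y u x :=
      Finset.sum_le_sum_of_subset (Finset.subset_univ _)
    rw [Finset.sum_pair hne, hv, hw] at h2
    have := hout u; omega
  have huniq' : ∀ u v w, y v u = 1 → y w u = 1 → v = w := by
    intro u v w hv hw
    by_contra hne
    have h2 : (∑ x ∈ ({v, w} : Finset V), y x u) ≤ ∑ x, y x u :=
      Finset.sum_le_sum_of_subset (Finset.subset_univ _)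
    rw [Finset.sum_pair hne, hv, hw] at h2
    have := hin u; omega
  have hmem : ∀ u v, y u v = 1 → ∃ w, y v w = 1 := by
    intro u v h
    have h1 : 1 ≤ ∑ w, y w v :=
      h ▸ Finset.single_le_sum (f := fun x => y x v) (fun _ _ => Nat.zero_le _)
        (Finset.mem_univ u)
    have h2 : 1 ≤ ∑ w, y v w := by rw [hbal v]; exact h1
    by_contra hno
    push_neg at hno
    have hz : ∀ w, y v w = 0 := by
      intro w; have := hy01 v w; have := hno w; omega
    simp only [hz, Finset.sum_const_zero] at h2
    omega
  -- the successor function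
  have hgex : ∀ u : V, ∃ v : V,
      ((∃ w, y u w = 1) → y u v = 1) ∧ ((¬ ∃ w, y u w = 1) → v = u) := by
    intro u
    by_cases h : ∃ w, y u w = 1
    · obtain ⟨w, hw⟩ := h
      exact ⟨w, fun _ => hw, fun hn => absurd ⟨w, hw⟩ hn⟩
    · exact ⟨u, fun h' => absurd h' h, fun _ => rfl⟩
  choose g hg1 hg2 using hgex
  have hgval : ∀ u v, y u v = 1 → g u = v := by
    intro u v h
    exact huniq u (g u) v (hg1 u ⟨v, h⟩) h
  have hginj : Function.Injective g := by
    intro a b hab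
    by_cases ha : ∃ w, y a w = 1 <;> by_cases hb : ∃ w, y b w = 1
    · refine huniq' (g a) a b (hg1 a ha) ?_
      rw [hab]; exact hg1 b hb
    · exfalso
      apply hb
      apply hmem a b
      have := hg1 a ha
      rwa [hab, hg2 b hb] at this
    · exfalso
      apply ha
      apply hmem b a
      have := hg1 b hb
      rwa [← hab, hg2 a ha] at this
    · rw [← hg2 a ha, hab, hg2 b hb]
  -- closure of the support under g-iteration
  have hstep : ∀ u, (∃ w, y u w = 1) → (∃ w, y (g u) w = 1) :=
    fun u h => hmem u (g u) (hg1 u h)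
  have hiter : ∀ u, (∃ w, y u w = 1) → ∀ i, ∃ w, y (g^[i] u) w = 1 := by
    intro u h i
    induction i with
    | zero => exact h
    | succ n ih => rw [Function.iterate_succ_apply']; exact hstep _ ih
  -- the support set
  set S : Finset V := Finset.univ.filter (fun u => ∃ w, y u w = 1) with hS
  have hmemS : ∀ u, u ∈ S ↔ ∃ w, y u w = 1 := by
    intro u; simp [hS]
  have hScard : S.card ≤ K := by
    have h1 : (S.card : ℕ) = ∑ u ∈ S, ∑ v, y u v := by
      rw [Finset.card_eq_sum_ones]
      refine Finset.sum_congr rfl ?_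
      intro u hu
      obtain ⟨w, hw⟩ := (hmemS u).1 hu
      rw [hone u w hw]
    have h2 : ∑ u ∈ S, ∑ v, y u v ≤ ∑ u, ∑ v, y u v :=
      Finset.sum_le_sum_of_subset (Finset.subset_univ _)
    omega
  -- orbits are inside S
  have horbS : ∀ u, u ∈ S → ∀ v ∈ orb g hginj u, v ∈ S := by
    intro u hu v hv
    obtain ⟨i, hi⟩ := (mem_orb g hginj).1 hv
    rw [hmemS]
    exact hi ▸ hiter u ((hmemS u).1 hu) i
  refine ⟨S.image (cyc g hginj), ?_, ?_, ?_, ?_⟩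
  · -- each is a cycle
    intro c hc
    obtain ⟨u, hu, rfl⟩ := Finset.mem_image.1 hc
    set s := rep g hginj u with hsdef
    set n := per g hginj s with hndef
    have hsS : s ∈ S := horbS u hu _ (rep_mem g hginj u)
    have hlen : (cyc g hginj u).length = n := by simp [cyc, hsdef, hndef]
    have hne : cyc g hginj u ≠ [] := by
      intro h
      have := per_pos g hginj s
      rw [← List.length_eq_zero_iff, hlen] at h
      omega
    have hiS : ∀ i, g^[i] s ∈ S := by
      intro i
      rw [hmemS]
      exact hiter s ((hmemS s).1 hsS) i
    have hyi : ∀ i, y (g^[i] s) (g^[i + 1] s) = 1 := by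
      intro i
      rw [Function.iterate_succ_apply']
      exact hg1 _ ((hmemS _).1 (hiS i))
    refine ⟨hne, orbList_nodup g hginj s, ?_, ?_⟩
    · unfold List.Chain'; rw [List.isChain_iff_getElem]
      intro i hi
      have hlen' : (cyc g hginj u).length = n := hlen
      have h1 : (cyc g hginj u)[i]'(by omega) = g^[i] s := by
        simp [cyc, hsdef]
      have h2 : (cyc g hginj u)[i + 1]'(by omega) = g^[i + 1] s := by
        simp [cyc, hsdef]
      rw [h1, h2]
      exact hyi i
    · intro h
      rw [List.getLast_eq_getElem, List.head_eq_getElem_zero]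
      have h1 : (cyc g hginj u)[(cyc g hginj u).length - 1]'(by
          have := per_pos g hginj s; omega) = g^[n - 1] s := by
        simp [cyc, hlen, hsdef, hndef]
      have h2 : (cyc g hginj u)[0]'(by have := per_pos g hginj s; rw [hlen]; omega)
          = g^[0] s := by simp [cyc, hsdef]
      rw [h1, h2]
      have h3 : g (g^[n - 1] s) = s := by
        rw [← Function.iterate_succ_apply' g (n - 1) s,
          show (n - 1).succ = n by have := per_pos g hginj s; omega]
        exact iterate_per g hginj s
      have := hg1 _ ((hmemS _).1 (hiS (n - 1)))
      rw [h3] at this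
      simpa using this
  · -- length bound
    intro c hc
    obtain ⟨u, hu, rfl⟩ := Finset.mem_image.1 hc
    set s := rep g hginj u with hsdef
    have hsS : s ∈ S := horbS u hu _ (rep_mem g hginj u)
    have hsub : (cyc g hginj u).toFinset ⊆ S := by
      intro v hv
      rw [List.mem_toFinset] at hv
      exact horbS s hsS v ((mem_orbList g hginj).1 hv)
    have h1 : (cyc g hginj u).toFinset.card = (cyc g hginj u).length :=
      List.toFinset_card_of_nodup (orbList_nodup g hginj s)
    have h2 := Finset.card_le_card hsub
    omega
  · -- disjointness
    intro c hc c' hc' hne v hv hv'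
    obtain ⟨u, hu, rfl⟩ := Finset.mem_image.1 hc
    obtain ⟨u', hu', rfl⟩ := Finset.mem_image.1 hc'
    apply hne
    have h1 : v ∈ orb g hginj (rep g hginj u) := (mem_orbList g hginj).1 hv
    have h2 : v ∈ orb g hginj (rep g hginj u') := (mem_orbList g hginj).1 hv'
    have e1 : orb g hginj u = orb g hginj v := by
      rw [orb_eq g hginj h1, orb_eq g hginj (rep_mem g hginj u)]
    have e2 : orb g hginj u' = orb g hginj v := by
      rw [orb_eq g hginj h2, orb_eq g hginj (rep_mem g hginj u')]
    exact cyc_congr g hginj (e1.trans e2.symm)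
  · -- support characterization
    intro u v
    constructor
    · intro h
      have huS : u ∈ S := (hmemS u).2 ⟨v, h⟩
      refine ⟨cyc g hginj u, Finset.mem_image_of_mem _ huS, ?_⟩
      set s := rep g hginj u with hsdef
      set n := per g hginj s with hndef
      have huorb : u ∈ orb g hginj s := by
        rw [orb_eq g hginj (rep_mem g hginj u)]
        exact mem_orb_self g hginj u
      obtain ⟨i, hilt, hi⟩ : ∃ i < n, g^[i] s = u := by
        obtain ⟨i, hi⟩ := (mem_orb g hginj).1 huorb
        exact ⟨i % n, Nat.mod_lt _ (per_pos g hginj s), by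
          rw [← iterate_mod g hginj]; exact hi⟩
      have hlen : (cyc g hginj u).length = n := by simp [cyc, hsdef, hndef]
      rw [List.mem_iff_getElem]
      have hzl : ((cyc g hginj u).zip ((cyc g hginj u).rotate 1)).length = n := by
        rw [List.length_zip, List.length_rotate, hlen]; omega
      refine ⟨i, by omega, ?_⟩
      rw [List.getElem_zip]
      have h1 : (cyc g hginj u)[i]'(by omega) = g^[i] s := by simp [cyc, hsdef]
      have h2 : ((cyc g hginj u).rotate 1)[i]'(by rw [List.length_rotate]; omega)
          = g^[(i + 1) % n] s := by
        rw [List.getElem_rotate]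
        simp [cyc, hlen, hsdef, hndef]
      have h3 : g^[(i + 1) % n] s = g^[i + 1] s := (iterate_mod g hginj _ s).symm
      have h4 : g^[i + 1] s = g u := by rw [Function.iterate_succ_apply', hi]
      have h5 : g u = v := hgval u v h
      rw [h1, h2, h3, h4, h5, hi]
    · rintro ⟨c, hc, hmemz⟩
      obtain ⟨w, hw, rfl⟩ := Finset.mem_image.1 hc
      set s := rep g hginj w with hsdef
      set n := per g hginj s with hndef
      have hsS : s ∈ S := horbS w hw _ (rep_mem g hginj w)
      have hlen : (cyc g hginj w).length = n := by simp [cyc, hsdef, hndef]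
      rw [List.mem_iff_getElem] at hmemz
      obtain ⟨i, hilt, hi⟩ := hmemz
      have hzl : ((cyc g hginj w).zip ((cyc g hginj w).rotate 1)).length = n := by
        rw [List.length_zip, List.length_rotate, hlen]; omega
      rw [hzl] at hilt
      rw [List.getElem_zip] at hi
      have h1 : (cyc g hginj w)[i]'(by omega) = g^[i] s := by simp [cyc, hsdef]
      have h2 : ((cyc g hginj w).rotate 1)[i]'(by rw [List.length_rotate]; omega)
          = g^[(i + 1) % n] s := by
        rw [List.getElem_rotate]
        simp [cyc, hlen, hsdef, hndef]
      have h3 : g^[(i + 1) % n] s = g^[i + 1] s := (iterate_mod g hginj _ s).symm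
      injection hi with hu' hv'
      rw [h1] at hu'
      rw [h2, h3] at hv'
      have hiS : g^[i] s ∈ S := by
        rw [hmemS]; exact hiter s ((hmemS s).1 hsS) i
      have := hg1 _ ((hmemS _).1 hiS)
      rw [← hu', ← hv', Function.iterate_succ_apply']
      exact this
end

section
/- A maximum-reduced-cost path ending at any layer dominates: in a layered rooted DAG with arc weights, the maximum over all nodes n (at layer ≥ 2) of the maximum-weight root-to-n path, minus a terminal penalty depending only on the last arc's label, equals the maximum over all feasible (possibly non-maximal) paths of their total reduced cost; in particular, the optimal chain may be a proper prefix of a longer root-to-terminal path. -/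
def IsArcPath {Nd Ar : Type*} (src dst : Ar → Nd) (r : Nd) (l : List Ar) : Prop :=
  l ≠ [] ∧ (∀ h : l ≠ [], src (l.head h) = r) ∧ l.Chain' (fun a b => dst a = src b)

section helpers
variable {Nd Ar : Type*} (src dst : Ar → Nd) (r : Nd) (h : Ar → Ar → ℝ)

noncomputable def pcost (h : Ar → Ar → ℝ) (l : List Ar) : ℝ :=
  ((l.zip l.tail).map (fun q => h q.1 q.2)).sum

lemma pcost_single (a : Ar) : pcost h [a] = 0 := by simp [pcost]

lemma pcost_cons_cons (a b : Ar) (t : List Ar) :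
    pcost h (a :: b :: t) = h a b + pcost h (b :: t) := by
  simp [pcost, List.zip_cons_cons]

lemma pcost_append_singleton (l : List Ar) (a' a : Ar) (hl : l.getLast? = some a') :
    pcost h (l ++ [a]) = pcost h l + h a' a := by
  induction l with
  | nil => simp at hl
  | cons x t ih =>
    cases t with
    | nil =>
      simp at hl
      subst hl
      simp [pcost_cons_cons, pcost_single]
    | cons y s =>
      have hl' : (y :: s).getLast? = some a' := by
        rwa [List.getLast?_cons_cons] at hl
      have := ih hl'
      simp only [List.cons_append, pcost_cons_cons] at this ⊢
      linarith [this]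

lemma length_two_of_not_root (l : List Ar) (a : Ar) (hp : IsArcPath src dst r l)
    (hla : l.getLast? = some a) (ha : src a ≠ r) : 2 ≤ l.length := by
  obtain ⟨hne, hhead, _⟩ := hp
  match l, hne with
  | [x], _ =>
    simp at hla
    subst hla
    exact absurd (hhead (by simp)) ha
  | x :: y :: t, _ => simp

end helpers

/-- A maximum-reduced-cost path ending at any layer dominates: in a layered rooted DAG
where consecutive arcs `a', a` contribute weight `h a' a` and a path ending with arc `a`
pays the terminal penalty `p a` (the multiplier of the last label), with `η` satisfying
the Bellman recursion, the maximum of `0` and `η a - p a` over arcs `a` at layer ≥ 2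
(i.e. with `src a ≠ r`) equals the maximum reduced cost over all encoded chains (paths
from the root with at least two arcs) together with the empty option `0`. -/
theorem stmt19 {Nd Ar : Type*} [Fintype Ar] (src dst : Ar → Nd) (r : Nd)
    (h : Ar → Ar → ℝ) (p : Ar → ℝ)
    (hacyc : WellFounded (fun x y : Nd => ∃ a : Ar, src a = x ∧ dst a = y))
    (hroot : ∀ a : Ar, dst a ≠ r)
    (hreach : ∀ a : Ar, src a ≠ r → ∃ a' : Ar, dst a' = src a)
    (η : Ar → ℝ)
    (hη0 : ∀ a, src a = r → η a = 0)
    (hηrec : ∀ a, src a ≠ r →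
      IsGreatest {x : ℝ | ∃ a', dst a' = src a ∧ x = η a' + h a' a} (η a)) :
    sSup (insert (0 : ℝ) {x | ∃ a : Ar, src a ≠ r ∧ x = η a - p a})
      = sSup (insert (0 : ℝ) {x | ∃ l : List Ar, IsArcPath src dst r l ∧ 2 ≤ l.length ∧
          ∃ a, l.getLast? = some a ∧
            x = ((l.zip l.tail).map (fun q => h q.1 q.2)).sum - p a}) := by
  set S1 := insert (0 : ℝ) {x | ∃ a : Ar, src a ≠ r ∧ x = η a - p a} with hS1
  set S2 := insert (0 : ℝ) {x | ∃ l : List Ar, IsArcPath src dst r l ∧ 2 ≤ l.length ∧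
      ∃ a, l.getLast? = some a ∧
        x = ((l.zip l.tail).map (fun q => h q.1 q.2)).sum - p a} with hS2
  -- upper bound lemma : pcost l ≤ η a
  have upper : ∀ l : List Ar, IsArcPath src dst r l → ∀ a, l.getLast? = some a →
      pcost h l ≤ η a := by
    intro l
    induction l using List.reverseRecOn with
    | nil => intro hp; exact absurd rfl hp.1
    | append_singleton m x ih =>
      intro hp a hla
      have hax : a = x := by
        rw [List.getLast?_append_cons] at hla; simp at hla; exact hla.symm
      subst hax
      rcases m.eq_nil_or_concat' with hm | ⟨m', y, rfl⟩
      · subst hm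
        have hx : src a = r := hp.2.1 (by simp)
        rw [show ([] : List Ar) ++ [a] = [a] by simp, pcost_single, hη0 a hx]
      · -- m = m' ++ [y], nonempty
        have hmne : (m' ++ [y]) ≠ [] := by simp
        have hchain := hp.2.2
        unfold List.Chain' at hchain; rw [List.isChain_append] at hchain
        obtain ⟨hc1, _, hc3⟩ := hchain
        have hylast : (m' ++ [y]).getLast? = some y := by simp
        have hdy : dst y = src a := hc3 y hylast a rfl
        have hpm : IsArcPath src dst r (m' ++ [y]) := by
          refine ⟨hmne, ?_, hc1⟩
          intro _
          have := hp.2.1 (by simp)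
          rwa [List.head_append_of_ne_nil] at this
        have hsrc : src a ≠ r := by rw [← hdy]; exact hroot y
        have hrec := (hηrec a hsrc).2 ⟨y, hdy, rfl⟩
        have hcost := pcost_append_singleton h (m' ++ [y]) y a hylast
        have hmle := ih hpm y hylast
        linarith
  -- existence lemma
  have exists_path : ∀ a : Ar, ∃ l : List Ar, IsArcPath src dst r l ∧
      l.getLast? = some a ∧ pcost h l = η a := by
    have key : ∀ n : Nd, ∀ a : Ar, src a = n → ∃ l : List Ar, IsArcPath src dst r l ∧
        l.getLast? = some a ∧ pcost h l = η a := by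
      intro n
      induction n using hacyc.induction with
      | _ n ih =>
        intro a hsa
        by_cases hr : src a = r
        · exact ⟨[a], ⟨by simp, fun _ => by simpa using hr, List.isChain_singleton a⟩, by simp,
            by rw [pcost_single, hη0 a hr]⟩
        · obtain ⟨a', hda', heq⟩ := (hηrec a hr).1
          obtain ⟨l, hlp, hll, hlc⟩ := ih (src a') ⟨a', rfl, by rw [hda', hsa]⟩ a' rfl
          refine ⟨l ++ [a], ⟨by simp, ?_, ?_⟩, by simp, ?_⟩
          · intro _
            rw [List.head_append_of_ne_nil hlp.1]
            exact hlp.2.1 hlp.1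
          · unfold List.Chain'; rw [List.isChain_append]
            refine ⟨hlp.2.2, by simp, ?_⟩
            intro x hx y hy
            simp at hy
            subst hy
            rw [hll] at hx; simp at hx; subst hx; exact hda'
          · rw [pcost_append_singleton h l a' a hll, hlc, heq]
    intro a; exact key (src a) a rfl
  -- S1 bddAbove and nonempty
  have hS1fin : S1.Finite := by
    apply Set.Finite.subset ((Set.finite_range (fun a : Ar => η a - p a)).insert 0)
    rintro x (rfl | ⟨a, _, rfl⟩)
    · exact Set.mem_insert _ _
    · exact Set.mem_insert_of_mem _ ⟨a, rfl⟩
  have hS1ne : S1.Nonempty := ⟨0, Set.mem_insert _ _⟩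
  have hS2ne : S2.Nonempty := ⟨0, Set.mem_insert _ _⟩
  have hS1bdd : BddAbove S1 := hS1fin.bddAbove
  -- every element of S2 is ≤ sSup S1
  have hS2le : ∀ x ∈ S2, x ≤ sSup S1 := by
    rintro x (rfl | ⟨l, hlp, hlen, a, hla, rfl⟩)
    · exact le_csSup hS1bdd (Set.mem_insert _ _)
    · have hsrc : src a ≠ r := by
        rcases l.eq_nil_or_concat' with hm | ⟨m, x, rfl⟩
        · subst hm; simp at hla
        · have hax : x = a := by simpa using hla
          have hmne : m ≠ [] := by
            intro hcon; subst hcon; simp at hlen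
          obtain ⟨y, hy⟩ := List.getLast?_isSome.mpr hmne |> Option.isSome_iff_exists.mp
          have hchain := hlp.2.2
          unfold List.Chain' at hchain; rw [List.isChain_append] at hchain
          have hdy : dst y = src x := hchain.2.2 y hy x rfl
          rw [hax] at hdy
          rw [← hdy]; exact hroot y
      have h1 : pcost h l ≤ η a := upper l hlp a hla
      calc ((l.zip l.tail).map (fun q => h q.1 q.2)).sum - p a
          ≤ η a - p a := by
            have : ((l.zip l.tail).map (fun q => h q.1 q.2)).sum = pcost h l := rfl
            linarith
        _ ≤ sSup S1 := le_csSup hS1bdd (Set.mem_insert_of_mem _ ⟨a, hsrc, rfl⟩)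
  have hS2bdd : BddAbove S2 := ⟨sSup S1, fun x hx => hS2le x hx⟩
  apply le_antisymm
  · apply csSup_le hS1ne
    rintro x (rfl | ⟨a, hsrc, rfl⟩)
    · exact le_csSup hS2bdd (Set.mem_insert _ _)
    · obtain ⟨l, hlp, hll, hlc⟩ := exists_path a
      have hlen : 2 ≤ l.length := length_two_of_not_root src dst r l a hlp hll hsrc
      refine le_csSup hS2bdd (Set.mem_insert_of_mem _ ⟨l, hlp, hlen, a, hll, ?_⟩)
      rw [show ((l.zip l.tail).map (fun q => h q.1 q.2)).sum = pcost h l from rfl, hlc]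
  · exact csSup_le hS2ne hS2le
end
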